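/- Let α > 1 and define ψ_α : ℝ → ℂ by ψ_α(t) = Γ((α+1)/2)·(1−it)^{−(α+1)/2} (principal branch). Let L ≥ 1 be a natural number and set T_s = L^{−α/(α+2)}. Let x_max ≥ 0 and y_max ≥ y_min > 0. Then for all w = u + iv and z = x + iy with |u| ≤ x_max, |x| ≤ x_max, y_min ≤ v ≤ y_max, and y_min ≤ y ≤ y_max, T_s · Σ_{ℓ=−L+1}^{L} | ψ_α((ℓT_s−u)/v) − ψ_α((ℓT_s−x)/y) |² ≤ (Γ((α+3)/2)²/y_min⁴) · (2 + 4(x_max² + y_max²)) · L^{6/(α+2)} · |w − z|². -/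

import Mathlib

open Complex Real

/-- The Cauchy wavelet `ψ_α(t) = Γ((α+1)/2)·(1-it)^{-(α+1)/2}` (principal branch). -/
noncomputable def cauchyWavelet (α : ℝ) (t : ℝ) : ℂ :=
  (Real.Gamma ((α + 1) / 2) : ℂ) * (1 - Complex.I * (t : ℂ)) ^ (-(((α : ℂ) + 1) / 2))

lemma cauchy_hasDerivAt (α : ℝ) (r : ℝ) :
    HasDerivAt (cauchyWavelet α)
      ((Real.Gamma ((α + 1) / 2) : ℂ) *
        ((-(((α : ℂ) + 1) / 2)) * (1 - Complex.I * (r : ℂ)) ^ ((-(((α : ℂ) + 1) / 2)) - 1)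
          * (-Complex.I))) r := by
  set c : ℂ := -(((α : ℂ) + 1) / 2) with hc
  have h1 : HasDerivAt (fun t : ℝ => 1 - Complex.I * (t : ℂ)) (-Complex.I) r := by
    have h0 : HasDerivAt (fun t : ℝ => (t : ℂ)) 1 r := by
      simpa using (hasDerivAt_id r).ofReal_comp
    simpa using (h0.const_mul Complex.I).const_sub 1
  have hsp : (1 - Complex.I * (r : ℝ)) ∈ Complex.slitPlane := by
    simp [Complex.mem_slitPlane_iff]
  have hz := (Complex.hasStrictDerivAt_cpow_const (c := c) hsp).hasDerivAt
  have h2 := (hz.hasFDerivAt.restrictScalars ℝ).comp_hasDerivAt r h1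
  have h3 : HasDerivAt (fun t : ℝ => (1 - Complex.I * (t : ℂ)) ^ c)
      ((c * (1 - Complex.I * (r : ℂ)) ^ (c - 1)) * (-Complex.I)) r := by
    simpa [Function.comp_def, mul_comm, mul_left_comm] using h2
  rw [show cauchyWavelet α = fun t : ℝ => (Real.Gamma ((α + 1) / 2) : ℂ) * (1 - Complex.I * (t : ℂ)) ^ c from rfl]
  simpa [mul_assoc] using h3.const_mul ((Real.Gamma ((α + 1) / 2) : ℂ))

lemma cauchy_lip (α : ℝ) (hα : 1 < α) (s t : ℝ) :
    ‖cauchyWavelet α s - cauchyWavelet α t‖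
      ≤ Real.Gamma ((α + 3) / 2) * |s - t| := by
  have hpos : (0:ℝ) < (α + 1) / 2 := by linarith
  have hG : 0 < Real.Gamma ((α + 1) / 2) := Real.Gamma_pos_of_pos hpos
  have hbound : ∀ r : ℝ,
      ‖(Real.Gamma ((α + 1) / 2) : ℂ) *
        ((-(((α : ℂ) + 1) / 2)) * (1 - Complex.I * (r : ℂ)) ^ ((-(((α : ℂ) + 1) / 2)) - 1)
          * (-Complex.I))‖ ≤ Real.Gamma ((α + 3) / 2) := by
    intro r
    have hc : (-(((α : ℂ) + 1) / 2)) = ((-((α + 1) / 2) : ℝ) : ℂ) := by push_cast; ring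
    have hc1 : (-(((α : ℂ) + 1) / 2)) - 1 = ((-((α + 1) / 2) - 1 : ℝ) : ℂ) := by push_cast; ring
    have hz1 : (1:ℝ) ≤ ‖1 - Complex.I * (r : ℂ)‖ := by
      have := Complex.abs_re_le_norm (1 - Complex.I * (r : ℂ))
      simpa using this
    have hcp : ‖(1 - Complex.I * (r : ℂ)) ^ ((-(((α : ℂ) + 1) / 2)) - 1)‖ ≤ 1 := by
      rw [hc1, Complex.norm_cpow_real]
      exact Real.rpow_le_one_of_one_le_of_nonpos hz1 (by linarith)
    have : ‖(Real.Gamma ((α + 1) / 2) : ℂ) *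
        ((-(((α : ℂ) + 1) / 2)) * (1 - Complex.I * (r : ℂ)) ^ ((-(((α : ℂ) + 1) / 2)) - 1)
          * (-Complex.I))‖
        = Real.Gamma ((α + 1) / 2) * ((α + 1) / 2 *
            ‖(1 - Complex.I * (r : ℂ)) ^ ((-(((α : ℂ) + 1) / 2)) - 1)‖) := by
      rw [hc, norm_mul, norm_mul, norm_mul, Complex.norm_real, Real.norm_eq_abs,
        Complex.norm_real, Real.norm_eq_abs, norm_neg, Complex.norm_I, mul_one,
        _root_.abs_of_pos hG, _root_.abs_neg, _root_.abs_of_nonneg hpos.le]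
    rw [this]
    have hG3 : Real.Gamma ((α + 3) / 2) = (α + 1) / 2 * Real.Gamma ((α + 1) / 2) := by
      have := Real.Gamma_add_one (ne_of_gt hpos)
      rw [show (α + 3) / 2 = (α + 1) / 2 + 1 by ring, this]
    rw [hG3]
    nlinarith [mul_nonneg (mul_nonneg hG.le hpos.le) (sub_nonneg.2 hcp),
      norm_nonneg ((1 - Complex.I * (r : ℂ)) ^ ((-(((α : ℂ) + 1) / 2)) - 1))]
  have key := Convex.norm_image_sub_le_of_norm_hasDerivWithin_le
    (f := cauchyWavelet α)
    (f' := fun r : ℝ => (Real.Gamma ((α + 1) / 2) : ℂ) *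
        ((-(((α : ℂ) + 1) / 2)) * (1 - Complex.I * (r : ℂ)) ^ ((-(((α : ℂ) + 1) / 2)) - 1)
          * (-Complex.I)))
    (s := Set.univ)
    (fun r _ => (cauchy_hasDerivAt α r).hasDerivWithinAt)
    (fun r _ => hbound r) convex_univ (Set.mem_univ t) (Set.mem_univ s)
  simpa [Real.norm_eq_abs] using key

lemma sum_sq_le (L : ℕ) :
    (∑ ℓ ∈ Finset.Icc (-(L : ℤ) + 1) (L : ℤ), ((ℓ : ℝ)) ^ 2) ≤ (L : ℝ) ^ 3 := by
  induction L with
  | zero => simp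
  | succ n ih =>
    have hset : Finset.Icc (-((n : ℤ) + 1) + 1) ((n : ℤ) + 1)
        = insert (-(n : ℤ)) (insert ((n : ℤ) + 1) (Finset.Icc (-(n : ℤ) + 1) (n : ℤ))) := by
      ext m
      simp only [Finset.mem_Icc, Finset.mem_insert]
      omega
    have h1 : (-(n : ℤ)) ∉ insert ((n : ℤ) + 1) (Finset.Icc (-(n : ℤ) + 1) (n : ℤ)) := by
      simp only [Finset.mem_Icc, Finset.mem_insert]
      omega
    have h2 : ((n : ℤ) + 1) ∉ Finset.Icc (-(n : ℤ) + 1) (n : ℤ) := by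
      simp only [Finset.mem_Icc]
      omega
    push_cast
    rw [hset, Finset.sum_insert h1, Finset.sum_insert h2]
    push_cast
    have hn : (0:ℝ) ≤ (n : ℝ) := Nat.cast_nonneg n
    nlinarith [ih]

lemma card_Icc_int (L : ℕ) : (Finset.Icc (-(L : ℤ) + 1) (L : ℤ)).card = 2 * L := by
  rw [Int.card_Icc]
  omega

set_option maxHeartbeats 2000000 in
/-- Bound on the discretized L²-distance between sampled Cauchy wavelet windows at two
time-scale points `w = u + iv` and `z = x + iy` of the upper half-plane. -/
theorem discretized_distance_bound
    (α : ℝ) (hα : 1 < α) (L : ℕ) (hL : 1 ≤ L)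
    (x_max y_min y_max : ℝ) (hxm : 0 ≤ x_max) (hym : 0 < y_min) (hyy : y_min ≤ y_max)
    (u v x y : ℝ) (hu : |u| ≤ x_max) (hx : |x| ≤ x_max)
    (hv1 : y_min ≤ v) (hv2 : v ≤ y_max) (hy1 : y_min ≤ y) (hy2 : y ≤ y_max) :
    (L : ℝ) ^ (-α / (α + 2)) *
        ∑ ℓ ∈ Finset.Icc (-(L : ℤ) + 1) (L : ℤ),
          ‖(cauchyWavelet α (((ℓ : ℝ) * (L : ℝ) ^ (-α / (α + 2)) - u) / v)
                - cauchyWavelet α (((ℓ : ℝ) * (L : ℝ) ^ (-α / (α + 2)) - x) / y))‖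
            ^ 2
      ≤ Real.Gamma ((α + 3) / 2) ^ 2 / y_min ^ 4 * (2 + 4 * (x_max ^ 2 + y_max ^ 2))
          * (L : ℝ) ^ (6 / (α + 2))
          * ‖((u : ℂ) + Complex.I * (v : ℂ)) - ((x : ℂ) + Complex.I * (y : ℂ))‖ ^ 2 := by
  have hα2 : (0:ℝ) < α + 2 := by linarith
  have hne : α + 2 ≠ 0 := ne_of_gt hα2
  have hL0 : (0:ℝ) < (L : ℝ) := by exact_mod_cast Nat.pos_of_ne_zero (by omega)
  have hL1 : (1:ℝ) ≤ (L : ℝ) := by exact_mod_cast hL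
  set T : ℝ := (L : ℝ) ^ (-α / (α + 2)) with hT
  have hT0 : 0 < T := Real.rpow_pos_of_pos hL0 _
  have hC0 : 0 < Real.Gamma ((α + 3) / 2) := Real.Gamma_pos_of_pos (by linarith)
  set C : ℝ := Real.Gamma ((α + 3) / 2) with hCdef
  set W : ℝ := (u - x) ^ 2 + (v - y) ^ 2 with hWdef
  have hW0 : 0 ≤ W := by positivity
  have hv0 : 0 < v := lt_of_lt_of_le hym hv1
  have hy0 : 0 < y := lt_of_lt_of_le hym hy1
  have hu2 : u ^ 2 ≤ x_max ^ 2 := by nlinarith [_root_.sq_abs u, abs_nonneg u]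
  have hx2 : x ^ 2 ≤ x_max ^ 2 := by nlinarith [_root_.sq_abs x, abs_nonneg x]
  set K : ℝ := 2 * x_max ^ 2 + y_max ^ 2 with hKdef
  have hK0 : 0 ≤ K := by positivity
  clear_value T C W K
  have hWabs : ‖((u : ℂ) + Complex.I * (v : ℂ))
      - ((x : ℂ) + Complex.I * (y : ℂ))‖ ^ 2 = W := by
    rw [Complex.sq_norm, Complex.normSq_apply]
    simp [hWdef]
    ring
  -- per-term bound
  have hterm : ∀ ℓ ∈ Finset.Icc (-(L : ℤ) + 1) (L : ℤ),
      ‖cauchyWavelet α (((ℓ : ℝ) * T - u) / v)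
          - cauchyWavelet α (((ℓ : ℝ) * T - x) / y)‖ ^ 2
        ≤ C ^ 2 * W / y_min ^ 4 * (2 * (ℓ : ℝ) ^ 2 * T ^ 2 + K) := by
    intro ℓ _
    set a : ℝ := (ℓ : ℝ) * T with ha
    clear_value a
    have hst : (a - u) / v - (a - x) / y = ((a - u) * (y - v) + v * (x - u)) / (v * y) := by
      field_simp
      ring
    have lip := cauchy_lip α hα ((a - u) / v) ((a - x) / y)
    rw [← hCdef] at lip
    have h1 : ‖cauchyWavelet α ((a - u) / v) - cauchyWavelet α ((a - x) / y)‖ ^ 2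
        ≤ C ^ 2 * ((a - u) / v - (a - x) / y) ^ 2 := by
      calc ‖cauchyWavelet α ((a - u) / v) - cauchyWavelet α ((a - x) / y)‖ ^ 2
          ≤ (C * |(a - u) / v - (a - x) / y|) ^ 2 :=
            pow_le_pow_left₀ (norm_nonneg _) lip 2
        _ = C ^ 2 * ((a - u) / v - (a - x) / y) ^ 2 := by rw [mul_pow, _root_.sq_abs]
    have h2 : ((a - u) / v - (a - x) / y) ^ 2
        ≤ ((a - u) ^ 2 + v ^ 2) * W / (v * y) ^ 2 := by
      rw [hst, div_pow, div_le_div_iff_of_pos_right (by positivity : (0:ℝ) < (v * y) ^ 2), hWdef]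
      have hCS : ((a - u) * (y - v) + v * (x - u)) ^ 2
          + ((a - u) * (x - u) - v * (y - v)) ^ 2
          = ((a - u) ^ 2 + v ^ 2) * ((u - x) ^ 2 + (v - y) ^ 2) := by ring
      linarith [sq_nonneg ((a - u) * (x - u) - v * (y - v)), hCS]
    have h3 : ((a - u) ^ 2 + v ^ 2) * W / (v * y) ^ 2
        ≤ (2 * (ℓ : ℝ) ^ 2 * T ^ 2 + K) * W / y_min ^ 4 := by
      apply div_le_div₀ (by positivity) ?_ (by positivity) ?_
      · have ha2 : a ^ 2 = (ℓ : ℝ) ^ 2 * T ^ 2 := by rw [ha]; ring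
        have habs : (a - u) ^ 2 ≤ 2 * (ℓ : ℝ) ^ 2 * T ^ 2 + 2 * x_max ^ 2 := by
          nlinarith [sq_nonneg (a + u), ha2, hu2]
        have hvsq : v ^ 2 ≤ y_max ^ 2 := by nlinarith [hv0, hv2]
        have hfac : (a - u) ^ 2 + v ^ 2 ≤ 2 * (ℓ : ℝ) ^ 2 * T ^ 2 + K := by
          rw [hKdef]; linarith [habs, hvsq]
        exact mul_le_mul_of_nonneg_right hfac hW0
      · have hq : y_min * y_min ≤ v * y := mul_le_mul hv1 hy1 hym.le hv0.le
        nlinarith [hq, mul_pos hym hym]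
    calc ‖cauchyWavelet α ((a - u) / v)
          - cauchyWavelet α ((a - x) / y)‖ ^ 2
        ≤ C ^ 2 * ((a - u) / v - (a - x) / y) ^ 2 := h1
      _ ≤ C ^ 2 * (((a - u) ^ 2 + v ^ 2) * W / (v * y) ^ 2) := by
          exact mul_le_mul_of_nonneg_left h2 (by positivity)
      _ ≤ C ^ 2 * ((2 * (ℓ : ℝ) ^ 2 * T ^ 2 + K) * W / y_min ^ 4) := by
          exact mul_le_mul_of_nonneg_left h3 (by positivity)
      _ = C ^ 2 * W / y_min ^ 4 * (2 * (ℓ : ℝ) ^ 2 * T ^ 2 + K) := by ring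
  -- sum bound
  have hsum : (∑ ℓ ∈ Finset.Icc (-(L : ℤ) + 1) (L : ℤ),
        ‖cauchyWavelet α (((ℓ : ℝ) * T - u) / v)
          - cauchyWavelet α (((ℓ : ℝ) * T - x) / y)‖ ^ 2)
      ≤ C ^ 2 * W / y_min ^ 4 * (2 * T ^ 2 * (L : ℝ) ^ 3 + 2 * (L : ℝ) * K) := by
    calc (∑ ℓ ∈ Finset.Icc (-(L : ℤ) + 1) (L : ℤ),
          ‖cauchyWavelet α (((ℓ : ℝ) * T - u) / v)
            - cauchyWavelet α (((ℓ : ℝ) * T - x) / y)‖ ^ 2)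
        ≤ ∑ ℓ ∈ Finset.Icc (-(L : ℤ) + 1) (L : ℤ),
            C ^ 2 * W / y_min ^ 4 * (2 * (ℓ : ℝ) ^ 2 * T ^ 2 + K) :=
          Finset.sum_le_sum hterm
      _ = (C ^ 2 * W / y_min ^ 4 * 2 * T ^ 2) *
            (∑ ℓ ∈ Finset.Icc (-(L : ℤ) + 1) (L : ℤ), (ℓ : ℝ) ^ 2)
          + ((Finset.Icc (-(L : ℤ) + 1) (L : ℤ)).card : ℝ) * (C ^ 2 * W / y_min ^ 4 * K) := by
          have hre : ∀ ℓ ∈ Finset.Icc (-(L : ℤ) + 1) (L : ℤ),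
              C ^ 2 * W / y_min ^ 4 * (2 * (ℓ : ℝ) ^ 2 * T ^ 2 + K)
                = (C ^ 2 * W / y_min ^ 4 * 2 * T ^ 2) * (ℓ : ℝ) ^ 2
                  + C ^ 2 * W / y_min ^ 4 * K := fun ℓ _ => by ring
          rw [Finset.sum_congr rfl hre, Finset.sum_add_distrib, ← Finset.mul_sum,
            Finset.sum_const, nsmul_eq_mul]
      _ ≤ (C ^ 2 * W / y_min ^ 4 * 2 * T ^ 2) * (L : ℝ) ^ 3
          + (2 * (L : ℝ)) * (C ^ 2 * W / y_min ^ 4 * K) := by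
          have hcard : ((Finset.Icc (-(L : ℤ) + 1) (L : ℤ)).card : ℝ) = 2 * (L : ℝ) := by
            rw [card_Icc_int]; push_cast; ring
          rw [hcard]
          have hA : 0 ≤ C ^ 2 * W / y_min ^ 4 * 2 * T ^ 2 := by positivity
          have := mul_le_mul_of_nonneg_left (sum_sq_le L) hA
          linarith
      _ = C ^ 2 * W / y_min ^ 4 * (2 * T ^ 2 * (L : ℝ) ^ 3 + 2 * (L : ℝ) * K) := by ring
  -- rpow arithmetic
  have eT3 : T ^ 3 * (L : ℝ) ^ 3 = (L : ℝ) ^ (6 / (α + 2)) := by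
    rw [hT, ← Real.rpow_natCast ((L : ℝ) ^ (-α / (α + 2))) 3, ← Real.rpow_mul hL0.le,
      ← Real.rpow_natCast (L : ℝ) 3, ← Real.rpow_add hL0]
    congr 1
    push_cast
    field_simp
    ring
  have eT1 : T * (L : ℝ) = (L : ℝ) ^ (2 / (α + 2)) := by
    have : T * (L : ℝ) = (L : ℝ) ^ (-α / (α + 2)) * (L : ℝ) ^ (1 : ℝ) := by
      rw [hT, Real.rpow_one]
    rw [this, ← Real.rpow_add hL0]
    congr 1
    field_simp
    ring
  have hle26 : (L : ℝ) ^ (2 / (α + 2)) ≤ (L : ℝ) ^ (6 / (α + 2)) := by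
    apply Real.rpow_le_rpow_of_exponent_le hL1
    rw [div_le_div_iff₀ hα2 hα2]
    nlinarith [hα2]
  have hL6 : 0 < (L : ℝ) ^ (6 / (α + 2)) := Real.rpow_pos_of_pos hL0 _
  rw [hWabs]
  calc T * ∑ ℓ ∈ Finset.Icc (-(L : ℤ) + 1) (L : ℤ),
        ‖cauchyWavelet α (((ℓ : ℝ) * T - u) / v)
          - cauchyWavelet α (((ℓ : ℝ) * T - x) / y)‖ ^ 2
      ≤ T * (C ^ 2 * W / y_min ^ 4 * (2 * T ^ 2 * (L : ℝ) ^ 3 + 2 * (L : ℝ) * K)) :=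
        mul_le_mul_of_nonneg_left hsum hT0.le
    _ = C ^ 2 * W / y_min ^ 4 * (2 * (T ^ 3 * (L : ℝ) ^ 3) + 2 * (T * (L : ℝ)) * K) := by ring
    _ = C ^ 2 * W / y_min ^ 4 *
          (2 * (L : ℝ) ^ (6 / (α + 2)) + 2 * (L : ℝ) ^ (2 / (α + 2)) * K) := by
        rw [eT3, eT1]
    _ ≤ C ^ 2 / y_min ^ 4 * (2 + 4 * (x_max ^ 2 + y_max ^ 2)) * (L : ℝ) ^ (6 / (α + 2)) * W := by
        have h0 : (0:ℝ) ≤ C ^ 2 * W / y_min ^ 4 := by positivity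
        have hstep : 2 * (L : ℝ) ^ (6 / (α + 2)) + 2 * (L : ℝ) ^ (2 / (α + 2)) * K
            ≤ (2 + 4 * (x_max ^ 2 + y_max ^ 2)) * (L : ℝ) ^ (6 / (α + 2)) := by
          rw [hKdef]
          have h1 : (L : ℝ) ^ (2 / (α + 2)) * (2 * x_max ^ 2 + y_max ^ 2)
              ≤ (L : ℝ) ^ (6 / (α + 2)) * (2 * x_max ^ 2 + y_max ^ 2) :=
            mul_le_mul_of_nonneg_right hle26 (by positivity)
          nlinarith [hL6.le, sq_nonneg y_max, sq_nonneg x_max, h1]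
        refine le_trans (mul_le_mul_of_nonneg_left hstep h0) (le_of_eq (by ring))
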